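/- Let M be an m × n matrix with integer entries, and let the group (ℝˣ)ⁿ of n-tuples of nonzero reals act on (ℝˣ)^m by (g · c)_I = (∏_{j=1}^n g_j^{M_{Ij}}) · c_I for I ∈ {1,…,m}. Suppose J₂ ⊆ J ⊆ {1,…,m} are such that: the rows of the mod-2 reduction of M indexed by J₂ are linearly independent over ℤ/2ℤ and every row of the mod-2 reduction of M lies in their ℤ/2ℤ-span; and the rows of M indexed by J are linearly independent over ℝ and every row of M lies in their ℝ-span. Then the set W = { c ∈ (ℝˣ)^m : c_I = 1 for all I ∈ J₂, and c_I ∈ {1, −1} for all I ∈ J \ J₂ } intersects every orbit of the (ℝˣ)ⁿ-action in exactly one point. -/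

import Mathlib

open scoped BigOperators

/-- The fundamental domain for the exponentiated action of the diagonal group determined
by the root matrix `M`: if the rows of `M` indexed by `J₂` form a maximal
`ℤ/2ℤ`-linearly independent family mod 2, and the rows indexed by `J ⊇ J₂` form a maximal
`ℝ`-linearly independent family, then the set
`W = {c : c_I = 1 for I ∈ J₂, c_I = ±1 for I ∈ J \ J₂}`
meets every orbit of `(ℝˣ)ⁿ` acting by `(g · c)_I = (∏ j, g_j ^ M_{Ij}) c_I` in exactly
one point. -/
noncomputable def la (u : ℝˣ) : ℝ := Real.log |(u : ℝ)|

noncomputable def sb (u : ℝˣ) : ZMod 2 := if 0 < (u : ℝ) then 0 else 1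

lemma la_one : la 1 = 0 := by simp [la]

lemma la_neg_one : la (-1) = 0 := by simp [la]

lemma la_mul (u v : ℝˣ) : la (u * v) = la u + la v := by
  simp only [la, Units.val_mul, abs_mul]
  exact Real.log_mul (abs_ne_zero.mpr u.ne_zero) (abs_ne_zero.mpr v.ne_zero)

lemma la_zpow (u : ℝˣ) (k : ℤ) : la (u ^ k) = k * la u := by
  simp only [la, Units.val_zpow_eq_zpow_val]
  rw [Real.log_abs, Real.log_zpow, ← Real.log_abs]

lemma la_prod {ι : Type*} (s : Finset ι) (f : ι → ℝˣ) :
    la (∏ j ∈ s, f j) = ∑ j ∈ s, la (f j) := by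
  induction s using Finset.cons_induction with
  | empty => simp [la_one]
  | cons a s ha ih => rw [Finset.prod_cons, Finset.sum_cons, la_mul, ih]

lemma sb_one : sb 1 = 0 := by simp [sb]

lemma sb_mul (u v : ℝˣ) : sb (u * v) = sb u + sb v := by
  have hu := u.ne_zero; have hv := v.ne_zero
  rcases Ne.lt_or_gt hu with hu' | hu' <;> rcases Ne.lt_or_gt hv with hv' | hv' <;>
    simp only [sb, Units.val_mul]
  · rw [if_pos (mul_pos_of_neg_of_neg hu' hv'), if_neg (not_lt.mpr hu'.le),
      if_neg (not_lt.mpr hv'.le)]; decide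
  · rw [if_neg (not_lt.mpr (mul_nonpos_of_nonpos_of_nonneg hu'.le hv'.le)),
      if_neg (not_lt.mpr hu'.le), if_pos hv']; decide
  · rw [if_neg (not_lt.mpr (mul_nonpos_of_nonneg_of_nonpos hu'.le hv'.le)),
      if_pos hu', if_neg (not_lt.mpr hv'.le)]; decide
  · rw [if_pos (mul_pos hu' hv'), if_pos hu', if_pos hv']; decide

lemma sb_zpow (u : ℝˣ) (k : ℤ) : sb (u ^ k) = (k : ZMod 2) * sb u := by
  have hu := u.ne_zero
  rcases Ne.lt_or_gt hu with hu' | hu'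
  · rcases Int.even_or_odd k with hk | hk
    · have h1 : (0:ℝ) < (u:ℝ) ^ k := hk.zpow_pos hu
      have h2 : (k : ZMod 2) = 0 := by
        rw [ZMod.intCast_zmod_eq_zero_iff_dvd]; exact hk.two_dvd
      simp [sb, Units.val_zpow_eq_zpow_val, h1, h2]
    · have h1 : (u:ℝ) ^ k < 0 := hk.zpow_neg hu'
      have h2 : (k : ZMod 2) = 1 := by
        obtain ⟨l, rfl⟩ := hk; push_cast
        simp [show ((2:ZMod 2)) = 0 from rfl]
      simp [sb, Units.val_zpow_eq_zpow_val, not_lt.mpr h1.le, lt_asymm h1,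
        if_neg (not_lt.mpr hu'.le), h2]
  · have h1 : (0:ℝ) < (u:ℝ) ^ k := zpow_pos hu' k
    simp [sb, Units.val_zpow_eq_zpow_val, h1, if_pos hu']

lemma sb_prod {ι : Type*} (s : Finset ι) (f : ι → ℝˣ) :
    sb (∏ j ∈ s, f j) = ∑ j ∈ s, sb (f j) := by
  induction s using Finset.cons_induction with
  | empty => simp [sb_one]
  | cons a s ha ih => rw [Finset.prod_cons, Finset.sum_cons, sb_mul, ih]

lemma unit_eq_one (u : ℝˣ) (h1 : la u = 0) (h2 : sb u = 0) : u = 1 := by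
  have hpos : 0 < (u : ℝ) := by
    by_contra h
    simp only [sb, if_neg h] at h2
    exact one_ne_zero h2
  have habs : |(u:ℝ)| = 1 := by
    have := Real.exp_log (abs_pos.mpr u.ne_zero)
    rw [la] at h1; rw [h1, Real.exp_zero] at this; exact this.symm
  rw [abs_of_pos hpos] at habs
  exact Units.ext habs

lemma unit_pm (u : ℝˣ) (h1 : la u = 0) : u = 1 ∨ u = -1 := by
  have habs : |(u:ℝ)| = 1 := by
    have := Real.exp_log (abs_pos.mpr u.ne_zero)
    rw [la] at h1; rw [h1, Real.exp_zero] at this; exact this.symm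
  rcases abs_eq (by norm_num : (0:ℝ) ≤ 1) |>.mp habs with h | h
  · exact Or.inl (Units.ext h)
  · exact Or.inr (Units.ext h)

lemma la_pm (u : ℝˣ) (h : u = 1 ∨ u = -1) : la u = 0 := by
  rcases h with rfl | rfl
  · exact la_one
  · exact la_neg_one


/-- The linear functional `u ↦ ∑ j, u j * x j`. -/
def dotL (n : ℕ) (k : Type*) [CommRing k] (x : Fin n → k) : (Fin n → k) →ₗ[k] k where
  toFun u := ∑ j, u j * x j
  map_add' u v := by simp [add_mul, Finset.sum_add_distrib]
  map_smul' a u := by simp [Finset.mul_sum, mul_assoc]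

lemma surj_of_linearIndependent {k : Type*} [Field k] {ι : Type*} [Fintype ι] {n : ℕ}
    (A : ι → (Fin n → k)) (h : LinearIndependent k A) (d : ι → k) :
    ∃ x : Fin n → k, ∀ i, ∑ j, A i j * x j = d i := by
  classical
  set V := Submodule.span k (Set.range A) with hV
  let B : Module.Basis ι k V := Module.Basis.span h
  obtain ⟨W, hW⟩ := Submodule.exists_isCompl V
  let l : (Fin n → k) →ₗ[k] k := LinearMap.ofIsCompl hW (B.constr k d) 0
  refine ⟨fun j => l (Pi.single j 1), fun i => ?_⟩
  have hlAi : l (A i) = d i := by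
    have h1 : l ((B i : V) : Fin n → k) = B.constr k d (B i) :=
      LinearMap.ofIsCompl_left_apply hW (B i)
    have h2 : ((B i : V) : Fin n → k) = A i := congrArg Subtype.val (Module.Basis.span_apply h i)
    rw [h2, Module.Basis.constr_basis] at h1
    exact h1
  have hrep : (∑ j, A i j • (Pi.single j 1 : Fin n → k)) = A i := by
    ext j'
    simp [Pi.single_apply, Finset.sum_ite_eq', mul_ite]
  calc ∑ j, A i j * l (Pi.single j 1)
      = ∑ j, l (A i j • (Pi.single j 1 : Fin n → k)) := by
        simp [map_smul, smul_eq_mul]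
    _ = l (∑ j, A i j • (Pi.single j 1 : Fin n → k)) := (map_sum l _ _).symm
    _ = d i := by rw [hrep, hlAi]

lemma span_dot_zero {k : Type*} [CommRing k] {n : ℕ} {ι : Type*} (f : ι → (Fin n → k))
    (x : Fin n → k) (h0 : ∀ i, ∑ j, f i j * x j = 0) {v : Fin n → k}
    (hv : v ∈ Submodule.span k (Set.range f)) : ∑ j, v j * x j = 0 := by
  have hsub : Set.range f ⊆ (LinearMap.ker (dotL n k x) : Set (Fin n → k)) := by
    rintro _ ⟨i, rfl⟩
    exact h0 i
  exact Submodule.span_le.mpr hsub hv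


lemma la_phi {m n : ℕ} (M : Matrix (Fin m) (Fin n) ℤ) (g : Fin n → ℝˣ) (I : Fin m) :
    la (∏ j, g j ^ M I j) = ∑ j, (M I j : ℝ) * la (g j) := by
  rw [la_prod]
  exact Finset.sum_congr rfl fun j _ => la_zpow _ _

lemma sb_phi {m n : ℕ} (M : Matrix (Fin m) (Fin n) ℤ) (g : Fin n → ℝˣ) (I : Fin m) :
    sb (∏ j, g j ^ M I j) = ∑ j, (M I j : ZMod 2) * sb (g j) := by
  rw [sb_prod]
  exact Finset.sum_congr rfl fun j _ => sb_zpow _ _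

theorem fundamental_domain_of_root_matrix
    (m n : ℕ) (M : Matrix (Fin m) (Fin n) ℤ)
    (J₂ J : Set (Fin m)) (hJ : J₂ ⊆ J)
    (h2indep : LinearIndependent (ZMod 2)
      (fun I : J₂ => fun j => ((M I j : ZMod 2))))
    (h2span : ∀ I : Fin m, (fun j => ((M I j : ZMod 2))) ∈
      Submodule.span (ZMod 2) (Set.range (fun I : J₂ => fun j => ((M I j : ZMod 2)))))
    (hRindep : LinearIndependent ℝ (fun I : J => fun j => ((M I j : ℝ))))
    (hRspan : ∀ I : Fin m, (fun j => ((M I j : ℝ))) ∈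
      Submodule.span ℝ (Set.range (fun I : J => fun j => ((M I j : ℝ))))) :
    ∀ c : Fin m → ℝˣ, ∃! w : Fin m → ℝˣ,
      ((∀ I ∈ J₂, w I = 1) ∧ (∀ I ∈ J \ J₂, w I = 1 ∨ w I = -1)) ∧
      ∃ gd : Fin n → ℝˣ, ∀ I, w I = (∏ j, gd j ^ M I j) * c I := by
  classical
  intro c
  haveI : Fintype ↥J := Set.Finite.fintype (Set.toFinite J)
  haveI : Fintype ↥J₂ := Set.Finite.fintype (Set.toFinite J₂)
  obtain ⟨t, ht⟩ := surj_of_linearIndependent _ hRindep (fun I : J => - la (c I))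
  obtain ⟨ε, hε⟩ := surj_of_linearIndependent _ h2indep (fun I : J₂ => - sb (c I))
  have hval : ∀ j, ((if ε j = 0 then 1 else -1) * Real.exp (t j)) ≠ 0 := fun j =>
    mul_ne_zero (by split <;> norm_num) (Real.exp_ne_zero _)
  set g : Fin n → ℝˣ := fun j => Units.mk0 _ (hval j) with hg
  have hla_g : ∀ j, la (g j) = t j := by
    intro j
    have h1 : |(if ε j = 0 then (1:ℝ) else -1)| = 1 := by split <;> norm_num
    simp only [la, hg, Units.val_mk0]
    rw [abs_mul, h1, one_mul, abs_of_pos (Real.exp_pos _), Real.log_exp]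
  have hsb_g : ∀ j, sb (g j) = ε j := by
    intro j
    have hz : ∀ x : ZMod 2, x = 0 ∨ x = 1 := by decide
    by_cases h : ε j = 0
    · have hpos : (0:ℝ) < (g j : ℝ) := by
        simp only [hg, Units.val_mk0, if_pos h]
        positivity
      simp [sb, hpos, h]
    · have hneg : (g j : ℝ) < 0 := by
        simp only [hg, Units.val_mk0, if_neg h]
        have := Real.exp_pos (t j)
        nlinarith
      rcases hz (ε j) with h' | h'
      · exact absurd h' h
      · simp [sb, not_lt.mpr hneg.le, h']
  set w : Fin m → ℝˣ := fun I => (∏ j, g j ^ M I j) * c I with hw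
  have hlaw : ∀ I ∈ J, la (w I) = 0 := by
    intro I hI
    have := ht ⟨I, hI⟩
    simp only [hw, la_mul, la_phi]
    simp only [hla_g]
    rw [this]
    simp
  have hsbw : ∀ I ∈ J₂, sb (w I) = 0 := by
    intro I hI
    have := hε ⟨I, hI⟩
    simp only [hw, sb_mul, sb_phi]
    simp only [hsb_g]
    rw [this]
    simp
    exact CharTwo.add_self_eq_zero _
  have hw1 : ∀ I ∈ J₂, w I = 1 := fun I hI =>
    unit_eq_one _ (hlaw I (hJ hI)) (hsbw I hI)
  have hw2 : ∀ I ∈ J \ J₂, w I = 1 ∨ w I = -1 := fun I hI =>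
    unit_pm _ (hlaw I hI.1)
  refine ⟨w, ⟨⟨hw1, hw2⟩, g, fun I => rfl⟩, ?_⟩
  rintro w' ⟨⟨hw1', hw2'⟩, g', hg'⟩
  set h : Fin n → ℝˣ := fun j => g' j * (g j)⁻¹ with hh
  have hphi : ∀ I, w' I = (∏ j, h j ^ M I j) * w I := by
    intro I
    have hP : ∏ j, h j ^ M I j = (∏ j, g' j ^ M I j) * (∏ j, g j ^ M I j)⁻¹ := by
      simp [hh, mul_zpow, inv_zpow, Finset.prod_mul_distrib, Finset.prod_inv_distrib]
    rw [hg' I, hP, hw]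
    group
  have hla_w' : ∀ I ∈ J, la (w' I) = 0 := by
    intro I hI
    by_cases h2 : I ∈ J₂
    · rw [hw1' I h2]; exact la_one
    · exact la_pm _ (hw2' I ⟨hI, h2⟩)
  have hτJ : ∀ i : J, ∑ j, (M i j : ℝ) * la (h j) = 0 := by
    rintro ⟨I, hI⟩
    have e1 : la (w' I) = (∑ j, (M I j : ℝ) * la (h j)) + la (w I) := by
      rw [hphi I, la_mul, la_phi]
    rw [hla_w' I hI, hlaw I hI, add_zero] at e1
    exact e1.symm
  have hτ : ∀ I, ∑ j, (M I j : ℝ) * la (h j) = 0 := fun I =>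
    span_dot_zero _ _ hτJ (hRspan I)
  have hσJ₂ : ∀ i : J₂, ∑ j, (M i j : ZMod 2) * sb (h j) = 0 := by
    rintro ⟨I, hI⟩
    have e1 : sb (w' I) = (∑ j, (M I j : ZMod 2) * sb (h j)) + sb (w I) := by
      rw [hphi I, sb_mul, sb_phi]
    rw [hw1' I hI, hw1 I hI, sb_one, add_zero] at e1
    exact e1.symm
  have hσ : ∀ I, ∑ j, (M I j : ZMod 2) * sb (h j) = 0 := fun I =>
    span_dot_zero _ _ hσJ₂ (h2span I)
  funext I
  have hone : (∏ j, h j ^ M I j) = 1 := by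
    apply unit_eq_one
    · rw [la_phi]; exact hτ I
    · rw [sb_phi]; exact hσ I
  rw [hphi I, hone, one_mul]
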